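/- The divergence of the scalar superenergy tensor on a curved manifold with □φ = 0 satisfies ∇^α S_{αβλμ} = 2 ∇_β∇_{(λ}φ R_{μ)ρ} ∇^ρφ − g_{λμ} R^{σρ} ∇_β∇_ρφ ∇_σφ − ∇_σφ (2 ∇^ρ∇_{(λ}φ R^σ{}_{μ)ρβ} + g_{λμ} R^σ{}_{ρβτ} ∇^ρ∇^τφ). -/
import Mathlib
/-- The basic superenergy tensor of a (massless) scalar field,
`S_{αβλμ} = ∇_α∇_λφ ∇_μ∇_βφ + ∇_α∇_μφ ∇_β∇_λφ − g_{αβ} ∇_λ∇^ρφ ∇_μ∇_ρφ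
  − g_{λμ} ∇_α∇^ρφ ∇_β∇_ρφ + (1/2) g_{αβ} g_{λμ} ∇_σ∇_ρφ ∇^σ∇^ρφ`,
written in terms of the Hessian `H a b = ∇_a∇_b φ`, the metric `g` and its
inverse `ginv`. -/
noncomputable def Ssc {ι : Type*} [Fintype ι] (g ginv : ι → ι → ℝ)
    (H : ι → ι → ℝ) (α β l μ : ι) : ℝ :=
  H α l * H μ β + H α μ * H β l
  - g α β * (∑ ρ, ∑ ρ', ginv ρ ρ' * H l ρ * H μ ρ')
  - g l μ * (∑ ρ, ∑ ρ', ginv ρ ρ' * H α ρ * H β ρ')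
  + (1/2) * g α β * g l μ *
      (∑ σ, ∑ ρ, ∑ σ', ∑ ρ', ginv σ σ' * ginv ρ ρ' * H σ ρ * H σ' ρ')

/-- The covariant derivative `∇_n S_{αβλμ}` of the scalar superenergy tensor,
obtained by the Leibniz rule from its defining formula (`∇g = 0`);
`DH n a b = ∇_n ∇_a ∇_b φ` is the derivative of the Hessian `H`. -/
noncomputable def DSsc {ι : Type*} [Fintype ι] (g ginv : ι → ι → ℝ)
    (H : ι → ι → ℝ) (DH : ι → ι → ι → ℝ) (n α β l μ : ι) : ℝ :=
  DH n α l * H μ β + H α l * DH n μ β + DH n α μ * H β l + H α μ * DH n β l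
  - g α β * (∑ ρ, ∑ ρ', ginv ρ ρ' * (DH n l ρ * H μ ρ' + H l ρ * DH n μ ρ'))
  - g l μ * (∑ ρ, ∑ ρ', ginv ρ ρ' * (DH n α ρ * H β ρ' + H α ρ * DH n β ρ'))
  + (1/2) * g α β * g l μ * (∑ σ, ∑ ρ, ∑ σ', ∑ ρ',
      ginv σ σ' * ginv ρ ρ' * (DH n σ ρ * H σ' ρ' + H σ ρ * DH n σ' ρ'))

/-- The Ricci tensor `R_{μβ} = R^α{}_{μαβ}` obtained from the (lowered) Riemann
tensor by contraction with the inverse metric. -/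
noncomputable def RicciT {ι : Type*} [Fintype ι] (ginv : ι → ι → ℝ)
    (R : ι → ι → ι → ι → ℝ) (μ β : ι) : ℝ :=
  ∑ a, ∑ a', ginv a a' * R a' μ a β

section SumHelpers

variable {ι : Type*} [Fintype ι]

private lemma sum2_congr' (f g : ι → ι → ℝ) (h : ∀ a b, f a b = g a b) :
    ∑ a, ∑ b, f a b = ∑ a, ∑ b, g a b :=
  Finset.sum_congr rfl fun a _ => Finset.sum_congr rfl fun b _ => h a b

private lemma sum2_add (f g : ι → ι → ℝ) :
    ∑ a, ∑ b, (f a b + g a b) = (∑ a, ∑ b, f a b) + ∑ a, ∑ b, g a b := by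
  simp [Finset.sum_add_distrib]

private lemma sum2_sub (f g : ι → ι → ℝ) :
    ∑ a, ∑ b, (f a b - g a b) = (∑ a, ∑ b, f a b) - ∑ a, ∑ b, g a b := by
  simp [Finset.sum_sub_distrib]

private lemma sum2_neg (f : ι → ι → ℝ) : ∑ a, ∑ b, (-f a b) = -∑ a, ∑ b, f a b := by
  simp

private lemma sum2_mul_right (f : ι → ι → ℝ) (c : ℝ) :
    ∑ a, ∑ b, f a b * c = (∑ a, ∑ b, f a b) * c := by
  simp [Finset.sum_mul]

private lemma sum2_mul_left (f : ι → ι → ℝ) (c : ℝ) :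
    ∑ a, ∑ b, c * f a b = c * ∑ a, ∑ b, f a b := by
  simp [Finset.mul_sum]

private lemma sum2_flatten (G : ι → ι → ℝ) (F : ι → ι → ι → ι → ℝ) :
    ∑ a, ∑ b, G a b * (∑ c, ∑ d, F a b c d) = ∑ a, ∑ b, ∑ c, ∑ d, G a b * F a b c d :=
  sum2_congr' _ _ fun a b => by
    rw [Finset.mul_sum]; exact Finset.sum_congr rfl fun c _ => Finset.mul_sum ..

private lemma sum4_congr (f g : ι → ι → ι → ι → ℝ) (h : ∀ a b c d, f a b c d = g a b c d) :
    ∑ a, ∑ b, ∑ c, ∑ d, f a b c d = ∑ a, ∑ b, ∑ c, ∑ d, g a b c d :=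
  Finset.sum_congr rfl fun a _ => Finset.sum_congr rfl fun b _ =>
    Finset.sum_congr rfl fun c _ => Finset.sum_congr rfl fun d _ => h a b c d

private lemma sum4_add (f g : ι → ι → ι → ι → ℝ) :
    ∑ a, ∑ b, ∑ c, ∑ d, (f a b c d + g a b c d)
      = (∑ a, ∑ b, ∑ c, ∑ d, f a b c d) + ∑ a, ∑ b, ∑ c, ∑ d, g a b c d := by
  simp [Finset.sum_add_distrib]

private lemma sum4_neg (f : ι → ι → ι → ι → ℝ) :
    ∑ a, ∑ b, ∑ c, ∑ d, (-f a b c d) = -∑ a, ∑ b, ∑ c, ∑ d, f a b c d := by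
  simp

private lemma sum4_s12 (f : ι → ι → ι → ι → ℝ) :
    ∑ a, ∑ b, ∑ c, ∑ d, f a b c d = ∑ a, ∑ b, ∑ c, ∑ d, f b a c d :=
  Finset.sum_comm

private lemma sum4_s23 (f : ι → ι → ι → ι → ℝ) :
    ∑ a, ∑ b, ∑ c, ∑ d, f a b c d = ∑ a, ∑ b, ∑ c, ∑ d, f a c b d :=
  Finset.sum_congr rfl fun _ _ => Finset.sum_comm

private lemma sum4_s34 (f : ι → ι → ι → ι → ℝ) :
    ∑ a, ∑ b, ∑ c, ∑ d, f a b c d = ∑ a, ∑ b, ∑ c, ∑ d, f a b d c :=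
  Finset.sum_congr rfl fun _ _ => Finset.sum_congr rfl fun _ _ => Finset.sum_comm

private lemma sum4_pair (f : ι → ι → ι → ι → ℝ) :
    ∑ a, ∑ b, ∑ c, ∑ d, f a b c d = ∑ a, ∑ b, ∑ c, ∑ d, f c d a b :=
  calc ∑ a, ∑ b, ∑ c, ∑ d, f a b c d
      = ∑ a, ∑ b, ∑ c, ∑ d, f a c b d := sum4_s23 f
    _ = ∑ a, ∑ b, ∑ c, ∑ d, f b c a d := sum4_s12 _
    _ = ∑ a, ∑ b, ∑ c, ∑ d, f b d a c := sum4_s34 _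
    _ = ∑ a, ∑ b, ∑ c, ∑ d, f c d a b := sum4_s23 _

private lemma sum4_cyc (f : ι → ι → ι → ι → ℝ) :
    ∑ a, ∑ b, ∑ c, ∑ d, f a b c d = ∑ a, ∑ b, ∑ c, ∑ d, f a d b c :=
  calc ∑ a, ∑ b, ∑ c, ∑ d, f a b c d
      = ∑ a, ∑ b, ∑ c, ∑ d, f a c b d := sum4_s23 f
    _ = ∑ a, ∑ b, ∑ c, ∑ d, f a d b c := sum4_s34 _

private lemma sum4_w2 (f : ι → ι → ι → ι → ℝ) :
    ∑ a, ∑ b, ∑ c, ∑ d, f a b c d = ∑ a, ∑ b, ∑ c, ∑ d, f d a c b :=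
  calc ∑ a, ∑ b, ∑ c, ∑ d, f a b c d
      = ∑ a, ∑ b, ∑ c, ∑ d, f b a c d := sum4_s12 f
    _ = ∑ a, ∑ b, ∑ c, ∑ d, f c a b d := sum4_s23 _
    _ = ∑ a, ∑ b, ∑ c, ∑ d, f d a b c := sum4_s34 _
    _ = ∑ a, ∑ b, ∑ c, ∑ d, f d a c b := sum4_s23 _

private lemma sum4_14 (f : ι → ι → ι → ι → ℝ) :
    ∑ a, ∑ b, ∑ c, ∑ d, f a b c d = ∑ a, ∑ b, ∑ c, ∑ d, f d b c a :=
  calc ∑ a, ∑ b, ∑ c, ∑ d, f a b c d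
      = ∑ a, ∑ b, ∑ c, ∑ d, f b a c d := sum4_s12 f
    _ = ∑ a, ∑ b, ∑ c, ∑ d, f c a b d := sum4_s23 _
    _ = ∑ a, ∑ b, ∑ c, ∑ d, f d a b c := sum4_s34 _
    _ = ∑ a, ∑ b, ∑ c, ∑ d, f d a c b := sum4_s23 _
    _ = ∑ a, ∑ b, ∑ c, ∑ d, f d b c a := sum4_s12 _

private lemma sum2_exchange (G : ι → ι → ℝ) (F : ι → ι → ι → ι → ℝ) :
    ∑ a, ∑ b, G a b * (∑ s, ∑ t, F a b s t)
      = ∑ s, ∑ t, ∑ a, ∑ b, G a b * F a b s t := by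
  have h : ∑ a, ∑ b, G a b * (∑ s, ∑ t, F a b s t)
      = ∑ a, ∑ b, ∑ s, ∑ t, G a b * F a b s t :=
    sum2_congr' _ _ fun a b => by
      rw [Finset.mul_sum]; exact Finset.sum_congr rfl fun s _ => Finset.mul_sum ..
  rw [h]; exact sum4_pair _

private lemma sum_exchange_pull (G : ι → ι → ℝ) (c : ι → ι → ℝ) (P : ι → ι → ℝ)
    (Q : ι → ι → ι → ℝ) :
    ∑ a, ∑ b, G a b * (P a b * (∑ s, ∑ t, c s t * Q s a b))
      = ∑ s, ∑ t, c s t * (∑ a, ∑ b, G a b * (P a b * Q s a b)) := by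
  calc ∑ a, ∑ b, G a b * (P a b * (∑ s, ∑ t, c s t * Q s a b))
      = ∑ a, ∑ b, G a b * (∑ s, ∑ t, P a b * (c s t * Q s a b)) :=
        sum2_congr' _ _ fun a b => by
          rw [show P a b * (∑ s, ∑ t, c s t * Q s a b)
              = ∑ s, ∑ t, P a b * (c s t * Q s a b) from by
            rw [Finset.mul_sum]; exact Finset.sum_congr rfl fun s _ => Finset.mul_sum ..]
    _ = ∑ s, ∑ t, ∑ a, ∑ b, G a b * (P a b * (c s t * Q s a b)) := sum2_exchange _ _
    _ = ∑ s, ∑ t, c s t * (∑ a, ∑ b, G a b * (P a b * Q s a b)) :=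
        sum2_congr' _ _ fun s t => by
          rw [show (∑ a, ∑ b, G a b * (P a b * (c s t * Q s a b)))
              = ∑ a, ∑ b, c s t * (G a b * (P a b * Q s a b)) from
            sum2_congr' _ _ fun a b => by ring, sum2_mul_left]

private lemma contract_delta [DecidableEq ι] (ginv g : ι → ι → ℝ)
    (hinv : ∀ a b, (∑ c, ginv a c * g c b) = if a = b then 1 else 0)
    (β : ι) (f : ι → ℝ) :
    (∑ α, ∑ α', ginv α α' * (g α' β * f α)) = f β := by
  have h1 : ∀ α, (∑ α', ginv α α' * (g α' β * f α)) = (if α = β then 1 else 0) * f α := by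
    intro α
    rw [show (∑ α', ginv α α' * (g α' β * f α)) = (∑ α', ginv α α' * g α' β) * f α from by
      rw [Finset.sum_mul]; exact Finset.sum_congr rfl fun _ _ => by ring, hinv]
  rw [Finset.sum_congr rfl fun α _ => h1 α]
  simp

private lemma contract_antisym (G F : ι → ι → ℝ) (hG : ∀ a b, G a b = G b a)
    (hF : ∀ a b, F a b = -F b a) : ∑ a, ∑ b, G a b * F a b = 0 := by
  have h : (∑ a, ∑ b, G a b * F a b) = -(∑ a, ∑ b, G a b * F a b) := by
    calc ∑ a, ∑ b, G a b * F a b = ∑ a, ∑ b, G b a * F b a := Finset.sum_comm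
      _ = ∑ a, ∑ b, -(G a b * F a b) :=
          sum2_congr' _ _ fun a b => by rw [hG a b, hF a b]; ring
      _ = -(∑ a, ∑ b, G a b * F a b) := by simp
  linarith

end SumHelpers
section CurvHelpers

variable {ι : Type*} [Fintype ι]

private lemma ricci_symm (ginv : ι → ι → ℝ) (R : ι → ι → ι → ι → ℝ)
    (hginv : ∀ a b, ginv a b = ginv b a)
    (hR3 : ∀ a b c d, R a b c d = R c d a b) (x y : ι) :
    RicciT ginv R x y = RicciT ginv R y x := by
  unfold RicciT
  calc ∑ a, ∑ b, ginv a b * R b x a y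
      = ∑ a, ∑ b, ginv a b * R a y b x := sum2_congr' _ _ fun a b => by rw [hR3 b x a y]
    _ = ∑ a, ∑ b, ginv b a * R b y a x := Finset.sum_comm
    _ = ∑ a, ∑ b, ginv a b * R b y a x := sum2_congr' _ _ fun a b => by rw [hginv b a]

private lemma divHess (ginv : ι → ι → ℝ) (R : ι → ι → ι → ι → ℝ) (dφ : ι → ℝ)
    (DH : ι → ι → ι → ℝ)
    (hginv : ∀ a b, ginv a b = ginv b a)
    (hR2 : ∀ a b c d, R a b c d = - R a b d c)
    (hR3 : ∀ a b c d, R a b c d = R c d a b)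
    (hDH2 : ∀ n a b, DH n a b = DH n b a)
    (hRicciId : ∀ a l ρ, DH a l ρ - DH l a ρ
      = -∑ s, ∑ s', ginv s s' * dφ s' * R s ρ a l)
    (hwaveD : ∀ n, ∑ ρ, ∑ ρ', ginv ρ ρ' * DH n ρ ρ' = 0) :
    ∀ x, (∑ α, ∑ α', ginv α α' * DH α α' x)
      = ∑ s, ∑ s', ginv s s' * dφ s' * RicciT ginv R x s := by
  intro x
  have hpoint : ∀ a b, DH a b x
      = DH x b a - (∑ s, ∑ s', ginv s s' * dφ s' * R s x a b)
        - (∑ s, ∑ s', ginv s s' * dφ s' * R s a b x) := by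
    intro a b
    have h1 := hRicciId a b x
    have h2 := hRicciId b x a
    have h3 := hDH2 b a x
    linarith
  have hsplit : (∑ α, ∑ α', ginv α α' * DH α α' x)
      = (∑ a, ∑ b, ginv a b * DH x b a)
        - (∑ a, ∑ b, ginv a b * (∑ s, ∑ s', ginv s s' * dφ s' * R s x a b))
        - (∑ a, ∑ b, ginv a b * (∑ s, ∑ s', ginv s s' * dφ s' * R s a b x)) := by
    rw [show (∑ α, ∑ α', ginv α α' * DH α α' x)
        = ∑ a, ∑ b, (ginv a b * DH x b a
          - ginv a b * (∑ s, ∑ s', ginv s s' * dφ s' * R s x a b)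
          - ginv a b * (∑ s, ∑ s', ginv s s' * dφ s' * R s a b x)) from
      sum2_congr' _ _ fun a b => by rw [hpoint a b]; ring]
    simp [Finset.sum_sub_distrib]
  have e1 : (∑ a, ∑ b, ginv a b * DH x b a) = 0 := by
    rw [sum2_congr' _ (fun a b => ginv a b * DH x a b) (fun a b => by rw [hDH2 x b a])]
    exact hwaveD x
  have e2 : (∑ a, ∑ b, ginv a b * (∑ s, ∑ s', ginv s s' * dφ s' * R s x a b)) = 0 := by
    refine contract_antisym ginv _ hginv fun a b => ?_
    rw [← sum2_neg]
    exact sum2_congr' _ _ fun s t => by rw [hR2 s x a b]; ring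
  have e3 : (∑ a, ∑ b, ginv a b * (∑ s, ∑ s', ginv s s' * dφ s' * R s a b x))
      = -∑ s, ∑ s', ginv s s' * dφ s' * RicciT ginv R x s := by
    rw [sum2_exchange ginv (fun a b s t => ginv s t * dφ t * R s a b x)]
    rw [← sum2_neg]
    refine sum2_congr' _ _ fun s t => ?_
    have hr : ∀ a b, R s a b x = -R b x a s := fun a b => by
      rw [hR3 s a b x, hR2 b x s a]
    calc ∑ a, ∑ b, ginv a b * (ginv s t * dφ t * R s a b x)
        = ∑ a, ∑ b, -(ginv s t * dφ t * (ginv a b * R b x a s)) :=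
          sum2_congr' _ _ fun a b => by rw [hr a b]; ring
      _ = -(ginv s t * dφ t * ∑ a, ∑ b, ginv a b * R b x a s) := by
          rw [sum2_neg, sum2_mul_left]
      _ = -(ginv s t * dφ t * RicciT ginv R x s) := rfl
  rw [hsplit, e1, e2, e3]; ring

end CurvHelpers
/-- On a curved manifold, for `φ` satisfying the wave equation
`□φ = 0`, the divergence of the scalar superenergy tensor is
`∇^α S_{αβλμ} = 2 ∇_β∇_{(λ}φ R_{μ)ρ} ∇^ρφ − g_{λμ} R^{σρ} ∇_β∇_ρφ ∇_σφ
  − ∇_σφ (2 ∇^ρ∇_{(λ}φ R^σ{}_{μ)ρβ} + g_{λμ} R^σ{}_{ρβτ} ∇^ρ∇^τφ)`.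
Components: `dφ σ = ∇_σ φ`, `H = ∇∇φ` (symmetric Hessian), `DH = ∇H` (symmetric
in its last two indices, and obeying the Ricci commutation identity with the
curvature), wave equation and its derivative as trace conditions; round brackets
denote symmetrization over `λ, μ`. -/
theorem scalar_superenergy_divergence {ι : Type*} [Fintype ι] [DecidableEq ι]
    (g ginv : ι → ι → ℝ) (R : ι → ι → ι → ι → ℝ)
    (dφ : ι → ℝ) (H : ι → ι → ℝ) (DH : ι → ι → ι → ℝ)
    (hg : ∀ a b, g a b = g b a) (hginv : ∀ a b, ginv a b = ginv b a)
    (hinv : ∀ a b, ∑ c, ginv a c * g c b = if a = b then 1 else 0)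
    (hR1 : ∀ a b c d, R a b c d = - R b a c d)
    (hR2 : ∀ a b c d, R a b c d = - R a b d c)
    (hR3 : ∀ a b c d, R a b c d = R c d a b)
    (hB1 : ∀ a b c d, R a b c d + R a c d b + R a d b c = 0)
    (hH : ∀ a b, H a b = H b a)
    (hDH2 : ∀ n a b, DH n a b = DH n b a)
    (hRicciId : ∀ a l ρ, DH a l ρ - DH l a ρ
      = -∑ s, ∑ s', ginv s s' * dφ s' * R s ρ a l)
    (hwave : ∑ ρ, ∑ ρ', ginv ρ ρ' * H ρ ρ' = 0)
    (hwaveD : ∀ n, ∑ ρ, ∑ ρ', ginv ρ ρ' * DH n ρ ρ' = 0) :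
    ∀ β l μ,
      ∑ α, ∑ α', ginv α α' * DSsc g ginv H DH α α' β l μ
        = (∑ ρ, ∑ ρ', (H β l * RicciT ginv R μ ρ + H β μ * RicciT ginv R l ρ)
              * ginv ρ ρ' * dφ ρ')
          - g l μ * (∑ σ, ∑ ρ, ∑ σ', ∑ ρ', ginv σ σ' * ginv ρ ρ' *
              RicciT ginv R σ' ρ' * H β ρ * dφ σ)
          - (∑ σ, ∑ s, ginv σ s * dφ σ *
              ((∑ ρ, ∑ ρ', ginv ρ ρ' * (H ρ' l * R s μ ρ β + H ρ' μ * R s l ρ β))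
                + g l μ * (∑ ρ, ∑ τ, ∑ ρ', ∑ τ', ginv ρ ρ' * ginv τ τ' *
                    H ρ' τ' * R s ρ β τ))) := by
  intro β l μ
  have hdiv := divHess ginv R dφ DH hginv hR2 hR3 hDH2 hRicciId hwaveD
  -- Bianchi consequence : R s b a c = R s c a b + R s a b c
  have hBR : ∀ s a b c, R s b a c = R s c a b + R s a b c := by
    intro s a b c
    have h1 := hB1 s b a c
    have h2 := hR2 s a c b
    have h3 := hR2 s c b a
    linarith
  -- commutation with Bianchi : DH a x y = DH y x a - ∑ c R s x a y
  have hcommD : ∀ a x y, DH a x y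
      = DH y x a - ∑ s, ∑ s', ginv s s' * dφ s' * R s x a y := by
    intro a x y
    have h1 := hRicciId a x y
    have h2 := hRicciId x y a
    have h3 := hDH2 x a y
    have hsum : (∑ s, ∑ s', ginv s s' * dφ s' * R s y a x)
        + (∑ s, ∑ s', ginv s s' * dφ s' * R s a x y)
        = ∑ s, ∑ s', ginv s s' * dφ s' * R s x a y := by
      rw [← sum2_add]
      exact sum2_congr' _ _ fun s t => by rw [hBR s a x y]; ring
    linarith
  -- plain commutation : DH a β y = DH β y a - ∑ c R s y a β
  have hcommP : ∀ a y, DH a β y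
      = DH β y a - ∑ s, ∑ s', ginv s s' * dφ s' * R s y a β := by
    intro a y
    have h1 := hRicciId a β y
    have h2 := hDH2 β a y
    linarith
  -- ===== split of the divergence into seven groups =====
  have hsplit : (∑ α, ∑ α', ginv α α' * DSsc g ginv H DH α α' β l μ)
      = (∑ α, ∑ α', ginv α α' * (DH α α' l * H μ β))
        + (∑ α, ∑ α', ginv α α' * (H α' l * DH α μ β))
        + (∑ α, ∑ α', ginv α α' * (DH α α' μ * H β l))
        + (∑ α, ∑ α', ginv α α' * (H α' μ * DH α β l))
        - (∑ α, ∑ α', ginv α α' * (g α' β * (∑ ρ, ∑ ρ', ginv ρ ρ' *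
            (DH α l ρ * H μ ρ' + H l ρ * DH α μ ρ'))))
        - (∑ α, ∑ α', ginv α α' * (g l μ * (∑ ρ, ∑ ρ', ginv ρ ρ' *
            (DH α α' ρ * H β ρ' + H α' ρ * DH α β ρ'))))
        + (∑ α, ∑ α', ginv α α' * (g α' β * ((1/2) * g l μ *
            (∑ σ, ∑ ρ, ∑ σ', ∑ ρ', ginv σ σ' * ginv ρ ρ' *
              (DH α σ ρ * H σ' ρ' + H σ ρ * DH α σ' ρ'))))) := by
    rw [show (∑ α, ∑ α', ginv α α' * DSsc g ginv H DH α α' β l μ)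
        = ∑ α, ∑ α', (ginv α α' * (DH α α' l * H μ β)
          + ginv α α' * (H α' l * DH α μ β)
          + ginv α α' * (DH α α' μ * H β l)
          + ginv α α' * (H α' μ * DH α β l)
          - ginv α α' * (g α' β * (∑ ρ, ∑ ρ', ginv ρ ρ' *
              (DH α l ρ * H μ ρ' + H l ρ * DH α μ ρ')))
          - ginv α α' * (g l μ * (∑ ρ, ∑ ρ', ginv ρ ρ' *
              (DH α α' ρ * H β ρ' + H α' ρ * DH α β ρ')))
          + ginv α α' * (g α' β * ((1/2) * g l μ *
              (∑ σ, ∑ ρ, ∑ σ', ∑ ρ', ginv σ σ' * ginv ρ ρ' *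
                (DH α σ ρ * H σ' ρ' + H σ ρ * DH α σ' ρ'))))) from
      sum2_congr' _ _ fun a b => by simp only [DSsc]; ring]
    simp [Finset.sum_add_distrib, Finset.sum_sub_distrib]
  -- ===== T1 and T3 =====
  have hT1 : (∑ α, ∑ α', ginv α α' * (DH α α' l * H μ β))
      = (∑ s, ∑ s', ginv s s' * dφ s' * RicciT ginv R l s) * H μ β := by
    calc (∑ α, ∑ α', ginv α α' * (DH α α' l * H μ β))
        = ∑ α, ∑ α', (ginv α α' * DH α α' l) * H μ β :=
          sum2_congr' _ _ fun a b => by ring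
      _ = (∑ α, ∑ α', ginv α α' * DH α α' l) * H μ β := sum2_mul_right _ _
      _ = (∑ s, ∑ s', ginv s s' * dφ s' * RicciT ginv R l s) * H μ β := by rw [hdiv l]
  have hT3 : (∑ α, ∑ α', ginv α α' * (DH α α' μ * H β l))
      = (∑ s, ∑ s', ginv s s' * dφ s' * RicciT ginv R μ s) * H β l := by
    calc (∑ α, ∑ α', ginv α α' * (DH α α' μ * H β l))
        = ∑ α, ∑ α', (ginv α α' * DH α α' μ) * H β l :=
          sum2_congr' _ _ fun a b => by ring
      _ = (∑ α, ∑ α', ginv α α' * DH α α' μ) * H β l := sum2_mul_right _ _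
      _ = (∑ s, ∑ s', ginv s s' * dφ s' * RicciT ginv R μ s) * H β l := by rw [hdiv μ]
  -- ===== T2 and T4 =====
  have hT2 : (∑ α, ∑ α', ginv α α' * (H α' l * DH α μ β))
      = (∑ a, ∑ b, ginv a b * (H b l * DH β μ a))
        - ∑ s, ∑ t, ginv s t * dφ t * (∑ a, ∑ b, ginv a b * (H b l * R s μ a β)) := by
    calc (∑ α, ∑ α', ginv α α' * (H α' l * DH α μ β))
        = ∑ a, ∑ b, (ginv a b * (H b l * DH β μ a)
            - ginv a b * (H b l * (∑ s, ∑ s', ginv s s' * dφ s' * R s μ a β))) :=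
          sum2_congr' _ _ fun a b => by rw [hcommD a μ β]; ring
      _ = (∑ a, ∑ b, ginv a b * (H b l * DH β μ a))
          - ∑ a, ∑ b, ginv a b * (H b l * (∑ s, ∑ s', ginv s s' * dφ s' * R s μ a β)) :=
          sum2_sub _ _
      _ = (∑ a, ∑ b, ginv a b * (H b l * DH β μ a))
          - ∑ s, ∑ t, ginv s t * dφ t * (∑ a, ∑ b, ginv a b * (H b l * R s μ a β)) := by
          rw [sum_exchange_pull ginv (fun s t => ginv s t * dφ t)
            (fun a b => H b l) (fun s a b => R s μ a β)]
  have hT4 : (∑ α, ∑ α', ginv α α' * (H α' μ * DH α β l))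
      = (∑ a, ∑ b, ginv a b * (H b μ * DH β l a))
        - ∑ s, ∑ t, ginv s t * dφ t * (∑ a, ∑ b, ginv a b * (H b μ * R s l a β)) := by
    calc (∑ α, ∑ α', ginv α α' * (H α' μ * DH α β l))
        = ∑ a, ∑ b, (ginv a b * (H b μ * DH β l a)
            - ginv a b * (H b μ * (∑ s, ∑ s', ginv s s' * dφ s' * R s l a β))) :=
          sum2_congr' _ _ fun a b => by rw [hcommP a l]; ring
      _ = (∑ a, ∑ b, ginv a b * (H b μ * DH β l a))
          - ∑ a, ∑ b, ginv a b * (H b μ * (∑ s, ∑ s', ginv s s' * dφ s' * R s l a β)) :=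
          sum2_sub _ _
      _ = (∑ a, ∑ b, ginv a b * (H b μ * DH β l a))
          - ∑ s, ∑ t, ginv s t * dφ t * (∑ a, ∑ b, ginv a b * (H b μ * R s l a β)) := by
          rw [sum_exchange_pull ginv (fun s t => ginv s t * dφ t)
            (fun a b => H b μ) (fun s a b => R s l a β)]
  -- ===== T5 =====
  have hT5 : (∑ α, ∑ α', ginv α α' * (g α' β * (∑ ρ, ∑ ρ', ginv ρ ρ' *
        (DH α l ρ * H μ ρ' + H l ρ * DH α μ ρ'))))
      = (∑ a, ∑ b, ginv a b * (H b μ * DH β l a))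
        + (∑ a, ∑ b, ginv a b * (H b l * DH β μ a)) := by
    rw [contract_delta ginv g hinv β (fun α => ∑ ρ, ∑ ρ', ginv ρ ρ' *
      (DH α l ρ * H μ ρ' + H l ρ * DH α μ ρ'))]
    calc (∑ ρ, ∑ ρ', ginv ρ ρ' * (DH β l ρ * H μ ρ' + H l ρ * DH β μ ρ'))
        = ∑ ρ, ∑ ρ', (ginv ρ ρ' * (DH β l ρ * H μ ρ')
            + ginv ρ ρ' * (H l ρ * DH β μ ρ')) :=
          sum2_congr' _ _ fun a b => by ring
      _ = (∑ ρ, ∑ ρ', ginv ρ ρ' * (DH β l ρ * H μ ρ'))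
          + (∑ ρ, ∑ ρ', ginv ρ ρ' * (H l ρ * DH β μ ρ')) := sum2_add _ _
      _ = (∑ a, ∑ b, ginv a b * (H b μ * DH β l a))
          + (∑ a, ∑ b, ginv a b * (H b l * DH β μ a)) := by
          have e1 : (∑ ρ, ∑ ρ', ginv ρ ρ' * (DH β l ρ * H μ ρ'))
              = ∑ a, ∑ b, ginv a b * (H b μ * DH β l a) :=
            sum2_congr' _ _ fun a b => by rw [hH b μ]; ring
          have e2 : (∑ ρ, ∑ ρ', ginv ρ ρ' * (H l ρ * DH β μ ρ'))
              = ∑ a, ∑ b, ginv a b * (H b l * DH β μ a) := by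
            calc (∑ a, ∑ b, ginv a b * (H l a * DH β μ b))
                = ∑ a, ∑ b, ginv b a * (H l b * DH β μ a) := Finset.sum_comm
              _ = ∑ a, ∑ b, ginv a b * (H b l * DH β μ a) :=
                  sum2_congr' _ _ fun a b => by rw [hginv b a, hH l b]
          rw [e1, e2]
  -- ===== T7 =====
  have hT7 : (∑ α, ∑ α', ginv α α' * (g α' β * ((1/2) * g l μ *
        (∑ σ, ∑ ρ, ∑ σ', ∑ ρ', ginv σ σ' * ginv ρ ρ' *
          (DH α σ ρ * H σ' ρ' + H σ ρ * DH α σ' ρ')))))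
      = g l μ * (∑ σ, ∑ ρ, ∑ σ', ∑ ρ', ginv σ σ' * ginv ρ ρ' * (DH β σ ρ * H σ' ρ')) := by
    rw [contract_delta ginv g hinv β (fun α => (1/2) * g l μ *
      (∑ σ, ∑ ρ, ∑ σ', ∑ ρ', ginv σ σ' * ginv ρ ρ' *
        (DH α σ ρ * H σ' ρ' + H σ ρ * DH α σ' ρ')))]
    have hsplitQ : (∑ σ, ∑ ρ, ∑ σ', ∑ ρ', ginv σ σ' * ginv ρ ρ' *
          (DH β σ ρ * H σ' ρ' + H σ ρ * DH β σ' ρ'))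
        = (∑ σ, ∑ ρ, ∑ σ', ∑ ρ', ginv σ σ' * ginv ρ ρ' * (DH β σ ρ * H σ' ρ'))
          + (∑ σ, ∑ ρ, ∑ σ', ∑ ρ', ginv σ σ' * ginv ρ ρ' * (H σ ρ * DH β σ' ρ')) := by
      rw [← sum4_add]; exact sum4_congr _ _ fun a b c d => by ring
    have hQb : (∑ σ, ∑ ρ, ∑ σ', ∑ ρ', ginv σ σ' * ginv ρ ρ' * (H σ ρ * DH β σ' ρ'))
        = (∑ σ, ∑ ρ, ∑ σ', ∑ ρ', ginv σ σ' * ginv ρ ρ' * (DH β σ ρ * H σ' ρ')) := by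
      rw [sum4_pair (fun a b c d => ginv a c * ginv b d * (H a b * DH β c d))]
      exact sum4_congr _ _ fun a b c d => by rw [hginv c a, hginv d b]; ring
    rw [hsplitQ, hQb]; ring
  -- ===== T6 =====
  have hT6 : (∑ α, ∑ α', ginv α α' * (g l μ * (∑ ρ, ∑ ρ', ginv ρ ρ' *
        (DH α α' ρ * H β ρ' + H α' ρ * DH α β ρ'))))
      = g l μ * ((∑ ρ, ∑ ρ', ginv ρ ρ' * H β ρ' *
            (∑ s, ∑ s', ginv s s' * dφ s' * RicciT ginv R ρ s))
          + ((∑ σ, ∑ ρ, ∑ σ', ∑ ρ', ginv σ σ' * ginv ρ ρ' * (DH β σ ρ * H σ' ρ'))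
            + (∑ s, ∑ t, ginv s t * dφ t * (∑ ρ, ∑ τ, ∑ ρ', ∑ τ',
                ginv ρ ρ' * ginv τ τ' * H ρ' τ' * R s ρ β τ)))) := by
    have hW : (∑ a, ∑ b, ginv a b * (∑ ρ, ∑ ρ', ginv ρ ρ' *
          (DH a b ρ * H β ρ' + H b ρ * DH a β ρ')))
        = (∑ a, ∑ b, ginv a b * (∑ ρ, ∑ ρ', ginv ρ ρ' * (DH a b ρ * H β ρ')))
          + (∑ a, ∑ b, ginv a b * (∑ ρ, ∑ ρ', ginv ρ ρ' * (H b ρ * DH a β ρ'))) := by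
      rw [← sum2_add]
      refine sum2_congr' _ _ fun a b => ?_
      rw [show (∑ ρ, ∑ ρ', ginv ρ ρ' * (DH a b ρ * H β ρ' + H b ρ * DH a β ρ'))
          = (∑ ρ, ∑ ρ', ginv ρ ρ' * (DH a b ρ * H β ρ'))
            + (∑ ρ, ∑ ρ', ginv ρ ρ' * (H b ρ * DH a β ρ')) from by
        rw [← sum2_add]; exact sum2_congr' _ _ fun c d => by ring]
      ring
    have hU1 : (∑ a, ∑ b, ginv a b * (∑ ρ, ∑ ρ', ginv ρ ρ' * (DH a b ρ * H β ρ')))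
        = ∑ ρ, ∑ ρ', ginv ρ ρ' * H β ρ' *
            (∑ s, ∑ s', ginv s s' * dφ s' * RicciT ginv R ρ s) := by
      rw [sum2_exchange ginv (fun a b ρ ρ' => ginv ρ ρ' * (DH a b ρ * H β ρ'))]
      refine sum2_congr' _ _ fun ρ ρ' => ?_
      calc (∑ a, ∑ b, ginv a b * (ginv ρ ρ' * (DH a b ρ * H β ρ')))
          = ∑ a, ∑ b, (ginv ρ ρ' * H β ρ') * (ginv a b * DH a b ρ) :=
            sum2_congr' _ _ fun a b => by ring
        _ = (ginv ρ ρ' * H β ρ') * (∑ a, ∑ b, ginv a b * DH a b ρ) := sum2_mul_left _ _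
        _ = ginv ρ ρ' * H β ρ' * (∑ s, ∑ s', ginv s s' * dφ s' * RicciT ginv R ρ s) := by
            rw [hdiv ρ]
    have hU2 : (∑ a, ∑ b, ginv a b * (∑ ρ, ∑ ρ', ginv ρ ρ' * (H b ρ * DH a β ρ')))
        = (∑ a, ∑ b, ginv a b * (∑ ρ, ∑ ρ', ginv ρ ρ' * (H b ρ * DH β a ρ')))
          - (∑ a, ∑ b, ginv a b * (∑ ρ, ∑ ρ', ginv ρ ρ' * (H b ρ *
              (∑ s, ∑ s', ginv s s' * dφ s' * R s ρ' a β)))) := by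
      rw [← sum2_sub]
      refine sum2_congr' _ _ fun a b => ?_
      rw [show (∑ ρ, ∑ ρ', ginv ρ ρ' * (H b ρ * DH a β ρ'))
          = ∑ ρ, ∑ ρ', (ginv ρ ρ' * (H b ρ * DH β a ρ') - ginv ρ ρ' * (H b ρ *
              (∑ s, ∑ s', ginv s s' * dφ s' * R s ρ' a β))) from
        sum2_congr' _ _ fun c d => by
          have h := hRicciId a β d
          linear_combination (ginv c d * H b c) * h, sum2_sub]
      ring
    have hU2a : (∑ a, ∑ b, ginv a b * (∑ ρ, ∑ ρ', ginv ρ ρ' * (H b ρ * DH β a ρ')))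
        = ∑ σ, ∑ ρ, ∑ σ', ∑ ρ', ginv σ σ' * ginv ρ ρ' * (DH β σ ρ * H σ' ρ') := by
      rw [sum2_flatten ginv (fun a b c d => ginv c d * (H b c * DH β a d))]
      rw [sum4_cyc (fun σ ρ σ' ρ' => ginv σ σ' * ginv ρ ρ' * (DH β σ ρ * H σ' ρ'))]
      exact sum4_congr _ _ fun a b c d => by rw [hginv d c]; ring
    have hSec : (∑ a, ∑ b, ginv a b * (∑ ρ, ∑ ρ', ginv ρ ρ' * (H b ρ *
          (∑ s, ∑ s', ginv s s' * dφ s' * R s ρ' a β))))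
        = -∑ s, ∑ t, ginv s t * dφ t * (∑ ρ, ∑ τ, ∑ ρ', ∑ τ',
            ginv ρ ρ' * ginv τ τ' * H ρ' τ' * R s ρ β τ) := by
      rw [sum2_congr' _ (fun a b => ginv a b * (∑ s, ∑ t, ginv s t * dφ t *
          (∑ c, ∑ d, ginv c d * (H b c * R s d a β))))
        (fun a b => by rw [sum_exchange_pull ginv (fun s t => ginv s t * dφ t)
          (fun c d => H b c) (fun s c d => R s d a β)])]
      rw [sum2_exchange ginv (fun a b s t => ginv s t * dφ t *
        (∑ c, ∑ d, ginv c d * (H b c * R s d a β)))]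
      rw [← sum2_neg]
      refine sum2_congr' _ _ fun s t => ?_
      have hK : (∑ a, ∑ b, ginv a b * (∑ c, ∑ d, ginv c d * (H b c * R s d a β)))
          = -(∑ ρ, ∑ τ, ∑ ρ', ∑ τ', ginv ρ ρ' * ginv τ τ' * H ρ' τ' * R s ρ β τ) := by
        rw [sum2_flatten ginv (fun a b c d => ginv c d * (H b c * R s d a β))]
        rw [show (∑ ρ, ∑ τ, ∑ ρ', ∑ τ', ginv ρ ρ' * ginv τ τ' * H ρ' τ' * R s ρ β τ)
            = ∑ a, ∑ b, ∑ c, ∑ d, ginv d c * ginv a b * H c b * R s d β a from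
          sum4_w2 (fun ρ τ ρ' τ' => ginv ρ ρ' * ginv τ τ' * H ρ' τ' * R s ρ β τ)]
        rw [← sum4_neg]
        exact sum4_congr _ _ fun a b c d => by rw [hR2 s d a β, hginv d c, hH c b]; ring
      calc (∑ a, ∑ b, ginv a b * (ginv s t * dφ t *
            (∑ c, ∑ d, ginv c d * (H b c * R s d a β))))
          = ∑ a, ∑ b, (ginv s t * dφ t) * (ginv a b *
              (∑ c, ∑ d, ginv c d * (H b c * R s d a β))) :=
            sum2_congr' _ _ fun a b => by ring
        _ = (ginv s t * dφ t) * (∑ a, ∑ b, ginv a b *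
              (∑ c, ∑ d, ginv c d * (H b c * R s d a β))) := sum2_mul_left _ _
        _ = -(ginv s t * dφ t * (∑ ρ, ∑ τ, ∑ ρ', ∑ τ',
              ginv ρ ρ' * ginv τ τ' * H ρ' τ' * R s ρ β τ)) := by rw [hK]; ring
    calc (∑ α, ∑ α', ginv α α' * (g l μ * (∑ ρ, ∑ ρ', ginv ρ ρ' *
          (DH α α' ρ * H β ρ' + H α' ρ * DH α β ρ'))))
        = ∑ a, ∑ b, g l μ * (ginv a b * (∑ ρ, ∑ ρ', ginv ρ ρ' *
            (DH a b ρ * H β ρ' + H b ρ * DH a β ρ'))) :=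
          sum2_congr' _ _ fun a b => by ring
      _ = g l μ * (∑ a, ∑ b, ginv a b * (∑ ρ, ∑ ρ', ginv ρ ρ' *
            (DH a b ρ * H β ρ' + H b ρ * DH a β ρ'))) := sum2_mul_left _ _
      _ = _ := by rw [hW, hU1, hU2, hU2a, hSec]; ring
  -- ===== RHS pieces =====
  have hRHS1 : (∑ ρ, ∑ ρ', (H β l * RicciT ginv R μ ρ + H β μ * RicciT ginv R l ρ)
        * ginv ρ ρ' * dφ ρ')
      = (∑ s, ∑ s', ginv s s' * dφ s' * RicciT ginv R l s) * H μ β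
        + (∑ s, ∑ s', ginv s s' * dφ s' * RicciT ginv R μ s) * H β l := by
    calc (∑ ρ, ∑ ρ', (H β l * RicciT ginv R μ ρ + H β μ * RicciT ginv R l ρ)
          * ginv ρ ρ' * dφ ρ')
        = ∑ ρ, ∑ ρ', ((ginv ρ ρ' * dφ ρ' * RicciT ginv R l ρ) * H μ β
            + (ginv ρ ρ' * dφ ρ' * RicciT ginv R μ ρ) * H β l) :=
          sum2_congr' _ _ fun a b => by rw [hH β μ]; ring
      _ = (∑ ρ, ∑ ρ', (ginv ρ ρ' * dφ ρ' * RicciT ginv R l ρ) * H μ β)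
          + (∑ ρ, ∑ ρ', (ginv ρ ρ' * dφ ρ' * RicciT ginv R μ ρ) * H β l) := sum2_add _ _
      _ = (∑ s, ∑ s', ginv s s' * dφ s' * RicciT ginv R l s) * H μ β
          + (∑ s, ∑ s', ginv s s' * dφ s' * RicciT ginv R μ s) * H β l := by
          rw [sum2_mul_right, sum2_mul_right]
  have hRHS2 : (∑ σ, ∑ ρ, ∑ σ', ∑ ρ', ginv σ σ' * ginv ρ ρ' *
        RicciT ginv R σ' ρ' * H β ρ * dφ σ)
      = ∑ ρ, ∑ ρ', ginv ρ ρ' * H β ρ' *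
          (∑ s, ∑ s', ginv s s' * dφ s' * RicciT ginv R ρ s) := by
    rw [sum4_14 (fun σ ρ σ' ρ' => ginv σ σ' * ginv ρ ρ' *
      RicciT ginv R σ' ρ' * H β ρ * dφ σ)]
    rw [show (∑ ρ, ∑ ρ', ginv ρ ρ' * H β ρ' *
          (∑ s, ∑ s', ginv s s' * dφ s' * RicciT ginv R ρ s))
        = ∑ a, ∑ b, ∑ c, ∑ d, ginv a b * H β b * (ginv c d * dφ d * RicciT ginv R a c) from
      sum2_flatten (fun a b => ginv a b * H β b)
        (fun a b c d => ginv c d * dφ d * RicciT ginv R a c)]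
    exact sum4_congr _ _ fun a b c d => by
      rw [hginv d c, hginv b a, ricci_symm ginv R hginv hR3 c a]; ring
  have hRHS3 : (∑ σ, ∑ s, ginv σ s * dφ σ *
        ((∑ ρ, ∑ ρ', ginv ρ ρ' * (H ρ' l * R s μ ρ β + H ρ' μ * R s l ρ β))
          + g l μ * (∑ ρ, ∑ τ, ∑ ρ', ∑ τ', ginv ρ ρ' * ginv τ τ' *
              H ρ' τ' * R s ρ β τ)))
      = (∑ s, ∑ t, ginv s t * dφ t * (∑ a, ∑ b, ginv a b * (H b l * R s μ a β)))
        + (∑ s, ∑ t, ginv s t * dφ t * (∑ a, ∑ b, ginv a b * (H b μ * R s l a β)))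
        + g l μ * (∑ s, ∑ t, ginv s t * dφ t * (∑ ρ, ∑ τ, ∑ ρ', ∑ τ',
            ginv ρ ρ' * ginv τ τ' * H ρ' τ' * R s ρ β τ)) := by
    have hI1 : ∀ s, (∑ ρ, ∑ ρ', ginv ρ ρ' * (H ρ' l * R s μ ρ β + H ρ' μ * R s l ρ β))
        = (∑ ρ, ∑ ρ', ginv ρ ρ' * (H ρ' l * R s μ ρ β))
          + (∑ ρ, ∑ ρ', ginv ρ ρ' * (H ρ' μ * R s l ρ β)) := fun s => by
      rw [← sum2_add]; exact sum2_congr' _ _ fun a b => by ring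
    calc (∑ σ, ∑ s, ginv σ s * dφ σ *
          ((∑ ρ, ∑ ρ', ginv ρ ρ' * (H ρ' l * R s μ ρ β + H ρ' μ * R s l ρ β))
            + g l μ * (∑ ρ, ∑ τ, ∑ ρ', ∑ τ', ginv ρ ρ' * ginv τ τ' *
                H ρ' τ' * R s ρ β τ)))
        = ∑ σ, ∑ s, (ginv σ s * dφ σ * (∑ ρ, ∑ ρ', ginv ρ ρ' * (H ρ' l * R s μ ρ β))
            + ginv σ s * dφ σ * (∑ ρ, ∑ ρ', ginv ρ ρ' * (H ρ' μ * R s l ρ β))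
            + g l μ * (ginv σ s * dφ σ * (∑ ρ, ∑ τ, ∑ ρ', ∑ τ',
                ginv ρ ρ' * ginv τ τ' * H ρ' τ' * R s ρ β τ))) :=
          sum2_congr' _ _ fun a b => by rw [hI1 b]; ring
      _ = (∑ σ, ∑ s, ginv σ s * dφ σ * (∑ ρ, ∑ ρ', ginv ρ ρ' * (H ρ' l * R s μ ρ β)))
          + (∑ σ, ∑ s, ginv σ s * dφ σ * (∑ ρ, ∑ ρ', ginv ρ ρ' * (H ρ' μ * R s l ρ β)))
          + (∑ σ, ∑ s, g l μ * (ginv σ s * dφ σ * (∑ ρ, ∑ τ, ∑ ρ', ∑ τ',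
              ginv ρ ρ' * ginv τ τ' * H ρ' τ' * R s ρ β τ))) := by
          rw [sum2_add, sum2_add]
      _ = (∑ s, ∑ t, ginv s t * dφ t * (∑ a, ∑ b, ginv a b * (H b l * R s μ a β)))
          + (∑ s, ∑ t, ginv s t * dφ t * (∑ a, ∑ b, ginv a b * (H b μ * R s l a β)))
          + g l μ * (∑ s, ∑ t, ginv s t * dφ t * (∑ ρ, ∑ τ, ∑ ρ', ∑ τ',
              ginv ρ ρ' * ginv τ τ' * H ρ' τ' * R s ρ β τ)) := by
          have e1 : (∑ σ, ∑ s, ginv σ s * dφ σ *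
                (∑ ρ, ∑ ρ', ginv ρ ρ' * (H ρ' l * R s μ ρ β)))
              = ∑ s, ∑ t, ginv s t * dφ t *
                  (∑ a, ∑ b, ginv a b * (H b l * R s μ a β)) := by
            calc (∑ a, ∑ b, ginv a b * dφ a *
                  (∑ ρ, ∑ ρ', ginv ρ ρ' * (H ρ' l * R b μ ρ β)))
                = ∑ a, ∑ b, ginv b a * dφ b *
                    (∑ ρ, ∑ ρ', ginv ρ ρ' * (H ρ' l * R a μ ρ β)) := Finset.sum_comm
              _ = ∑ s, ∑ t, ginv s t * dφ t *
                    (∑ a, ∑ b, ginv a b * (H b l * R s μ a β)) :=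
                  sum2_congr' _ _ fun a b => by rw [hginv b a]
          have e2 : (∑ σ, ∑ s, ginv σ s * dφ σ *
                (∑ ρ, ∑ ρ', ginv ρ ρ' * (H ρ' μ * R s l ρ β)))
              = ∑ s, ∑ t, ginv s t * dφ t *
                  (∑ a, ∑ b, ginv a b * (H b μ * R s l a β)) := by
            calc (∑ a, ∑ b, ginv a b * dφ a *
                  (∑ ρ, ∑ ρ', ginv ρ ρ' * (H ρ' μ * R b l ρ β)))
                = ∑ a, ∑ b, ginv b a * dφ b *
                    (∑ ρ, ∑ ρ', ginv ρ ρ' * (H ρ' μ * R a l ρ β)) := Finset.sum_comm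
              _ = ∑ s, ∑ t, ginv s t * dφ t *
                    (∑ a, ∑ b, ginv a b * (H b μ * R s l a β)) :=
                  sum2_congr' _ _ fun a b => by rw [hginv b a]
          have e3 : (∑ σ, ∑ s, g l μ * (ginv σ s * dφ σ * (∑ ρ, ∑ τ, ∑ ρ', ∑ τ',
                ginv ρ ρ' * ginv τ τ' * H ρ' τ' * R s ρ β τ)))
              = g l μ * (∑ s, ∑ t, ginv s t * dφ t * (∑ ρ, ∑ τ, ∑ ρ', ∑ τ',
                  ginv ρ ρ' * ginv τ τ' * H ρ' τ' * R s ρ β τ)) := by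
            rw [sum2_mul_left]
            congr 1
            calc (∑ a, ∑ b, ginv a b * dφ a * (∑ ρ, ∑ τ, ∑ ρ', ∑ τ',
                  ginv ρ ρ' * ginv τ τ' * H ρ' τ' * R b ρ β τ))
                = ∑ a, ∑ b, ginv b a * dφ b * (∑ ρ, ∑ τ, ∑ ρ', ∑ τ',
                    ginv ρ ρ' * ginv τ τ' * H ρ' τ' * R a ρ β τ) := Finset.sum_comm
              _ = ∑ s, ∑ t, ginv s t * dφ t * (∑ ρ, ∑ τ, ∑ ρ', ∑ τ',
                    ginv ρ ρ' * ginv τ τ' * H ρ' τ' * R s ρ β τ) :=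
                  sum2_congr' _ _ fun a b => by rw [hginv b a]
          rw [e1, e2, e3]
  -- ===== final assembly =====
  rw [hsplit, hT1, hT2, hT3, hT4, hT5, hT6, hT7, hRHS1, hRHS2, hRHS3]
  ring
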